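/- Fix m₁,…,m_n ∈ ℤ^d and let φ : ℂ[x₁,…,x_n] → ℂ[t₁^{±1},…,t_d^{±1}] be the ℂ-algebra homomorphism determined by φ(x_i) = t^{m_i}, where ℂ[t₁^{±1},…,t_d^{±1}] is the Laurent polynomial ring (the group algebra ℂ[ℤ^d]). Let L = {l ∈ ℤ^n : Σ_{i=1}^n l_i m_i = 0} be the kernel of the homomorphism ℤ^n → ℤ^d sending e_i ↦ m_i. Then ker φ = ⟨x^α − x^β : α, β ∈ ℕ^n, α − β ∈ L⟩, i.e., the kernel is generated by the binomials x^α − x^β with Σ α_i m_i = Σ β_i m_i. -/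

import Mathlib

open MvPolynomial

/-- The monomial map `ℂ[x₁,…,x_n] → ℂ[t₁^{±1},…,t_d^{±1}]` sending `x_i ↦ t^{m_i}`,
where the Laurent polynomial ring is the additive monoid algebra `ℂ[ℤ^d]`. -/
noncomputable def monomialMap {n d : ℕ} (m : Fin n → Fin d → ℤ) :
    MvPolynomial (Fin n) ℂ →ₐ[ℂ] AddMonoidAlgebra ℂ (Fin d → ℤ) :=
  aeval (fun i => AddMonoidAlgebra.single (m i) (1 : ℂ))

/-- The exponent of the image of the monomial `x^γ`. -/
def expMap {n d : ℕ} (m : Fin n → Fin d → ℤ) (γ : Fin n →₀ ℕ) : Fin d → ℤ :=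
  ∑ i, (γ i : ℤ) • m i

lemma monomialMap_monomial {n d : ℕ} (m : Fin n → Fin d → ℤ) (γ : Fin n →₀ ℕ) (c : ℂ) :
    monomialMap m (monomial γ c) = AddMonoidAlgebra.single (expMap m γ) c := by
  classical
  rw [monomialMap, aeval_monomial]
  rw [Finsupp.prod_fintype _ _ (fun i => pow_zero _)]
  simp only [AddMonoidAlgebra.single_pow, one_pow]
  rw [AddMonoidAlgebra.prod_single]
  have halg : (algebraMap ℂ (AddMonoidAlgebra ℂ (Fin d → ℤ))) c
      = AddMonoidAlgebra.single 0 c := rfl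
  rw [halg, AddMonoidAlgebra.single_mul_single]
  congr 1
  · simp [expMap, Nat.cast_smul_eq_nsmul]
  · simp

theorem ker_monomialMap {n d : ℕ} (m : Fin n → Fin d → ℤ) :
    RingHom.ker (monomialMap m) = Ideal.span {f | ∃ α β : Fin n →₀ ℕ,
      (∑ i, (α i : ℤ) • m i) = (∑ i, (β i : ℤ) • m i) ∧
      f = monomial α (1 : ℂ) - monomial β (1 : ℂ)} := by
  classical
  apply le_antisymm
  · intro f hf
    rw [RingHom.mem_ker] at hf
    -- choose a representative in each fiber of expMap
    let rep : (Fin d → ℤ) → (Fin n →₀ ℕ) := fun v =>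
      if h : ∃ γ : Fin n →₀ ℕ, expMap m γ = v then h.choose else 0
    have hrep : ∀ γ : Fin n →₀ ℕ, expMap m (rep (expMap m γ)) = expMap m γ := by
      intro γ
      have h : ∃ γ' : Fin n →₀ ℕ, expMap m γ' = expMap m γ := ⟨γ, rfl⟩
      simp only [rep, dif_pos h]
      exact h.choose_spec
    -- the coefficients of the image, fiberwise
    have hφ : ∑ γ ∈ f.support, AddMonoidAlgebra.single (expMap m γ) (coeff γ f) = 0 := by
      have : monomialMap m f = 0 := hf
      rw [f.as_sum, map_sum] at this
      simpa only [monomialMap_monomial] using this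
    have hφ' : (∑ γ ∈ f.support, Finsupp.single (expMap m γ) (coeff γ f) :
        (Fin d → ℤ) →₀ ℂ) = 0 := by
      have := congrArg AddMonoidAlgebra.coeff hφ
      simpa [AddMonoidAlgebra.coeff_sum, AddMonoidAlgebra.coeff_single] using this
    have hcoef : ∀ v : Fin d → ℤ,
        (∑ γ ∈ f.support.filter (fun γ => expMap m γ = v), coeff γ f) = 0 := by
      intro v
      have := DFunLike.congr_fun hφ' v
      rw [Finsupp.finset_sum_apply] at this
      simp only [Finsupp.single_apply] at this
      rw [Finset.sum_filter]
      simpa using this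
    -- split f
    have hsplit : f =
        (∑ γ ∈ f.support, coeff γ f •
          (monomial γ (1:ℂ) - monomial (rep (expMap m γ)) (1:ℂ))) +
        ∑ γ ∈ f.support, coeff γ f • monomial (rep (expMap m γ)) (1:ℂ) := by
      rw [← Finset.sum_add_distrib]
      conv_lhs => rw [f.as_sum]
      refine Finset.sum_congr rfl fun γ _ => ?_
      rw [smul_sub, sub_add_cancel, smul_monomial, smul_eq_mul, mul_one]
    -- the second sum vanishes
    have hzero : ∑ γ ∈ f.support, coeff γ f • monomial (rep (expMap m γ)) (1:ℂ) = 0 := by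
      rw [← Finset.sum_fiberwise_of_maps_to (g := expMap m)
        (t := f.support.image (expMap m)) (fun x hx => Finset.mem_image_of_mem _ hx)]
      refine Finset.sum_eq_zero fun v _ => ?_
      have : ∑ γ ∈ f.support.filter (fun γ => expMap m γ = v),
          coeff γ f • monomial (rep (expMap m γ)) (1:ℂ)
          = ∑ γ ∈ f.support.filter (fun γ => expMap m γ = v),
          coeff γ f • monomial (rep v) (1:ℂ) := by
        refine Finset.sum_congr rfl fun γ hγ => ?_
        rw [(Finset.mem_filter.mp hγ).2]
      rw [this, ← Finset.sum_smul, hcoef v, zero_smul]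
    rw [hsplit, hzero, add_zero]
    refine Ideal.sum_mem _ fun γ _ => ?_
    rw [smul_eq_C_mul]
    refine Ideal.mul_mem_left _ _ (Ideal.subset_span ?_)
    exact ⟨γ, rep (expMap m γ), (hrep γ).symm, rfl⟩
  · rw [Ideal.span_le]
    rintro f ⟨α, β, hab, rfl⟩
    have hab' : expMap m α = expMap m β := hab
    simp [SetLike.mem_coe, RingHom.mem_ker, map_sub, monomialMap_monomial, hab']
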